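/- arXiv:2301.12556 — 3 statements merged into one kernel-verified Lean document; each statement's English description precedes it below -/
import Mathlib

section
/- Appending a character in constant time: for every finite alphabet Σ and every character a ∈ Σ there is a closed λ-term append_{Σ,a} of Λ_det such that for every value k and every string s ∈ Σ*, append_{Σ,a} k ⟨s⟩ →det² k ⟨a·s⟩ (exactly two →det-steps, independently of s and k). -/
namespace LogTM

/-- Untyped λ-terms with de Bruijn indices. -/
inductive Lam : Type
  | var : ℕ → Lam
  | lam : Lam → Lam
  | app : Lam → Lam → Lam

namespace Lam

/-- Values: variables and abstractions. -/
def IsValue : Lam → Prop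
  | var _ => True
  | lam _ => True
  | app _ _ => False

/-- Terms of the deterministic λ-calculus `Λ_det`:
    the argument of every application is a value. -/
def InDet : Lam → Prop
  | var _ => True
  | lam t => InDet t
  | app t u => InDet t ∧ InDet u ∧ IsValue u

/-- Shift the free variables `≥ d` by one. -/
def lift : ℕ → Lam → Lam
  | d, var n => if n < d then var n else var (n + 1)
  | d, lam t => lam (lift (d + 1) t)
  | d, app t u => app (lift d t) (lift d u)

/-- Capture-avoiding substitution `t[k := u]`. -/
def subst : Lam → ℕ → Lam → Lam
  | var n, k, u => if n < k then var n else if n = k then u else var (n - 1)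
  | lam t, k, u => lam (subst t (k + 1) (lift 0 u))
  | app t s, k, u => app (subst t k u) (subst s k u)

/-- Weak evaluation `→det` of the deterministic λ-calculus: β at the root,
    closed under evaluation contexts `E ::= ⟨·⟩ | E v`. -/
inductive Step : Lam → Lam → Prop
  | beta {t v : Lam} : IsValue v → Step (app (lam t) v) (subst t 0 v)
  | appL {t t' v : Lam} : IsValue v → Step t t' → Step (app t v) (app t' v)

/-- `n`-fold iteration of `→det`. -/
inductive StepN : ℕ → Lam → Lam → Prop
  | refl (t : Lam) : StepN 0 t t
  | head {n : ℕ} {t u r : Lam} : Step t u → StepN n u r → StepN (n + 1) t r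

/-- All free variables are `< d`. -/
def ClosedUnder : ℕ → Lam → Prop
  | d, var n => n < d
  | d, lam t => ClosedUnder (d + 1) t
  | d, app t u => ClosedUnder d t ∧ ClosedUnder d u

/-- Closed terms. -/
def Closed (t : Lam) : Prop := ClosedUnder 0 t

end Lam

/-- `n` nested abstractions. -/
def iterLam : ℕ → Lam → Lam
  | 0, t => t
  | n + 1, t => .lam (iterLam n t)

/-- Left-nested applications. -/
def mkApps : Lam → List Lam → Lam
  | t, [] => t
  | t, u :: us => mkApps (.app t u) us

/-- Scott encoding of the character `a` of a `k`-letter (ordered) alphabet: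
    `⟨a_i⟩ = λx_1…λx_k.x_i`. -/
def encChar (k : ℕ) (a : Fin k) : Lam := iterLam k (.var (k - 1 - (a : ℕ)))

/-- Scott encoding of strings over a `k`-letter (ordered) alphabet:
    `⟨ε⟩ = λx_1…λx_k.λx_ε.x_ε` and `⟨a_i·r⟩ = λx_1…λx_k.λx_ε.x_i ⟨r⟩`. -/
def encStr (k : ℕ) : List (Fin k) → Lam
  | [] => iterLam (k + 1) (.var 0)
  | a :: r => iterLam (k + 1) (.app (.var (k - (a : ℕ))) (encStr k r))

/-- Scott encoding of binary strings (alphabet `{0,1}`, `false = 0 < 1 = true`). -/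
def encBits : List Bool → Lam
  | [] => .lam (.lam (.lam (.var 0)))
  | false :: s => .lam (.lam (.lam (.app (.var 2) (encBits s))))
  | true :: s => .lam (.lam (.lam (.app (.var 1) (encBits s))))

/-- Successor on reversed binary strings. -/
def rsucc : List Bool → List Bool
  | [] => [true]
  | false :: s => true :: s
  | true :: s => false :: rsucc s

/-- Predecessor on (nonempty) reversed binary strings. -/
def rpred : List Bool → List Bool
  | [] => []
  | false :: s => true :: rpred s
  | [true] => []
  | true :: b :: s => false :: b :: s

/-- Lookup of the `(n+1)`-th character of a string using a reversed-binary counter. -/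
def rlookup {α : Type*} : List Bool → List α → Option α
  | _, [] => none
  | [], c :: _ => some c
  | b :: nb, _ :: s => rlookup (rpred (b :: nb)) s

/-- Input alphabet `B_I = {0, 1, L, R}`. -/
inductive BI : Type
  | b0 | b1 | bL | bR

/-- Work alphabet `B_W = {0, 1, □}`. -/
inductive BW : Type
  | w0 | w1 | wB

/-- Input head moves `{-1, +1, 0}`. -/
inductive IDir : Type
  | minus | plus | zero

/-- Work head moves `{←, →, ↓}`. -/
inductive WDir : Type
  | left | right | stay

/-- A deterministic binary Turing machine with input: states `Fin Q`, initial state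
    `qin`, final states `qT` and `qF`, and a partial transition function `δ` that is
    undefined on the final states. -/
structure TM where
  Q : ℕ
  qin : Fin Q
  qT : Fin Q
  qF : Fin Q
  δ : BI → BW → Fin Q → Option (IDir × BW × WDir × Fin Q)
  δ_final : ∀ b a s, (s = qT ∨ s = qF) → δ b a s = none

/-- A configuration `(i, n | w_l, a, w_r | s)`: read-only input `i`, input-head
    position `n`, work tape `w_l, a, w_r` (head on `a`), current state `s`. -/
structure Config (M : TM) where
  input : List BI
  pos : ℕ
  left : List BW
  head : BW
  right : List BW
  state : Fin M.Q

/-- Final configurations: the state is `qT` or `qF`. -/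
def Config.Final {M : TM} (C : Config M) : Prop := C.state = M.qT ∨ C.state = M.qF

/-- One machine transition, as a partial function (the relation `C →M D` is
    `M.step C = some D`). -/
def TM.step (M : TM) (C : Config M) : Option (Config M) :=
  match C.input[C.pos]? with
  | none => none
  | some b =>
    match M.δ b C.head C.state with
    | none => none
    | some (d, a', mv, s') =>
      let pos' : ℕ :=
        match d with
        | .minus => C.pos - 1
        | .plus => C.pos + 1
        | .zero => C.pos
      let w : List BW × BW × List BW :=
        match mv with
        | .stay => (C.left, a', C.right)
        | .left =>
          match C.left.getLast? with
          | none => ([], BW.wB, a' :: C.right)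
          | some a'' => (C.left.dropLast, a'', a' :: C.right)
        | .right =>
          match C.right with
          | [] => (C.left ++ [a'], BW.wB, [])
          | a'' :: r => (C.left ++ [a'], a'', r)
      some ⟨C.input, pos', w.1, w.2.1, w.2.2, s'⟩

/-- `n` machine transitions. -/
def TM.multiStep (M : TM) : ℕ → Config M → Option (Config M)
  | 0, C => some C
  | n + 1, C => (M.step C).bind (M.multiStep n)

/-- The fixed ordering `0 < 1 < L < R` of `B_I`. -/
def BI.toFin : BI → Fin 4
  | b0 => 0
  | b1 => 1
  | bL => 2
  | bR => 3

/-- The fixed ordering `0 < 1 < □` of `B_W`. -/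
def BW.toFin : BW → Fin 3
  | w0 => 0
  | w1 => 1
  | wB => 2

/-- Encoding of configurations:
    `⟨C⟩ = λx.(x ⟨i⟩ ⟨n̂⟩ ⟨w_l^R⟩ ⟨a⟩ ⟨w_r⟩ ⟨s⟩)`. -/
def encConfig {M : TM} (C : Config M) : Lam :=
  .lam (mkApps (.var 0)
    [encStr 4 (C.input.map BI.toFin),
     encBits (Nat.bits C.pos),
     encStr 3 (C.left.reverse.map BW.toFin),
     encChar 3 C.head.toFin,
     encStr 3 (C.right.map BW.toFin),
     encChar M.Q C.state])

/-- A bit as an input character. -/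
def bitToBI (b : Bool) : BI := if b then .b1 else .b0

/-- The initial configuration on binary input `i`: input tape `L·i·R`,
    input head at position `0`, empty work tape, initial state. -/
def initConfig (M : TM) (i : List Bool) : Config M :=
  ⟨BI.bL :: (i.map bitToBI) ++ [BI.bR], 0, [], BW.wB, [], M.qin⟩

/-- Scott-encoded booleans: `⟨true⟩ = λx.λy.x`, `⟨false⟩ = λx.λy.y`. -/
def encBool : Bool → Lam
  | true => .lam (.lam (.var 1))
  | false => .lam (.lam (.var 0))


namespace Lam

theorem closedUnder_mono : ∀ (t : Lam) {d d' : ℕ}, d ≤ d' →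
    ClosedUnder d t → ClosedUnder d' t
  | var n, d, d', h, hc => by
      simp only [ClosedUnder] at hc ⊢; omega
  | lam t, d, d', h, hc => closedUnder_mono t (by omega) hc
  | app t u, d, d', h, hc => ⟨closedUnder_mono t h hc.1, closedUnder_mono u h hc.2⟩

theorem lift_of_closedUnder : ∀ (t : Lam) {d : ℕ}, ClosedUnder d t → lift d t = t
  | var n, d, hc => by
      simp only [ClosedUnder] at hc; simp [lift, hc]
  | lam t, d, hc => by simp [lift, lift_of_closedUnder t hc]
  | app t u, d, hc => by
      simp [lift, lift_of_closedUnder t hc.1, lift_of_closedUnder u hc.2]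

theorem subst_of_closedUnder : ∀ (t : Lam) {d : ℕ} (u : Lam),
    ClosedUnder d t → subst t d u = t
  | var n, d, u, hc => by
      simp only [ClosedUnder] at hc; simp [subst, hc]
  | lam t, d, u, hc => by simp [subst, subst_of_closedUnder t _ hc]
  | app t s, d, u, hc => by
      simp [subst, subst_of_closedUnder t _ hc.1, subst_of_closedUnder s _ hc.2]

theorem subst_lift : ∀ (t : Lam) (d : ℕ) (u : Lam), subst (lift d t) d u = t
  | var n, d, u => by
      by_cases h : n < d
      · simp [lift, subst, h]
      · have h1 : ¬ (n + 1 < d) := by omega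
        have h2 : n + 1 ≠ d := by omega
        simp [lift, subst, h, h1, h2]
  | lam t, d, u => by simp [lift, subst, subst_lift t]
  | app t s, d, u => by simp [lift, subst, subst_lift t, subst_lift s]

end Lam

theorem closedUnder_iterLam : ∀ (n : ℕ) (t : Lam) (d : ℕ),
    Lam.ClosedUnder d (iterLam n t) ↔ Lam.ClosedUnder (n + d) t
  | 0, t, d => by simp [iterLam]
  | n + 1, t, d => by
      show Lam.ClosedUnder (d + 1) (iterLam n t) ↔ _
      rw [closedUnder_iterLam n t (d + 1)]
      have : n + (d + 1) = n + 1 + d := by omega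
      rw [this]

theorem inDet_iterLam : ∀ (n : ℕ) (t : Lam),
    Lam.InDet (iterLam n t) ↔ Lam.InDet t
  | 0, _ => Iff.rfl
  | n + 1, t => inDet_iterLam n t

theorem isValue_iterLam_succ (n : ℕ) (t : Lam) : (iterLam (n + 1) t).IsValue :=
  trivial

theorem subst_iterLam_closed (u : Lam) (hu : u.Closed) :
    ∀ (n : ℕ) (t : Lam) (d : ℕ),
      Lam.subst (iterLam n t) d u = iterLam n (Lam.subst t (d + n) u)
  | 0, t, d => rfl
  | n + 1, t, d => by
      show Lam.lam (Lam.subst (iterLam n t) (d + 1) (Lam.lift 0 u)) = _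
      rw [Lam.lift_of_closedUnder u hu, subst_iterLam_closed u hu n t (d + 1)]
      show iterLam (n + 1) _ = iterLam (n + 1) _
      congr 2
      omega

theorem encStr_closed (k : ℕ) : ∀ (s : List (Fin k)), (encStr k s).Closed
  | [] => by
      show Lam.ClosedUnder 0 (iterLam (k + 1) (.var 0))
      rw [closedUnder_iterLam]
      simp only [Lam.ClosedUnder]
      omega
  | a :: r => by
      show Lam.ClosedUnder 0 (iterLam (k + 1) _)
      rw [closedUnder_iterLam]
      refine ⟨?_, ?_⟩
      · simp only [Lam.ClosedUnder]; omega
      · exact Lam.closedUnder_mono _ (Nat.zero_le _) (encStr_closed k r)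

theorem encStr_isValue (k : ℕ) (s : List (Fin k)) : (encStr k s).IsValue := by
  cases s with
  | nil => exact isValue_iterLam_succ k _
  | cons a r => exact isValue_iterLam_succ k _

/-- appending a character in constant time: for every finite alphabet
    (of size `k`) and character `a`, there is a closed term `append` of `Λ_det` such
    that for every value `k` and string `s`, `append ⌜k⌝ ⟨s⟩ →det² ⌜k⌝ ⟨a·s⟩`
    (exactly two steps, independently of `s` and the continuation). -/
theorem append_char (k : ℕ) (a : Fin k) :
    ∃ appendTm : Lam, appendTm.Closed ∧ appendTm.InDet ∧
      ∀ kont : Lam, kont.IsValue → kont.InDet → ∀ s : List (Fin k),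
        Lam.StepN 2 (.app (.app appendTm kont) (encStr k s))
          (.app kont (encStr k (a :: s))) := by
  set T : Lam := iterLam (k + 1) (.app (.var (k - (a : ℕ))) (.var (k + 1))) with hT
  have hTclosed2 : Lam.ClosedUnder 2 T := by
    rw [hT, closedUnder_iterLam]
    refine ⟨?_, ?_⟩ <;> (simp only [Lam.ClosedUnder]; omega)
  have hTclosed1 : Lam.ClosedUnder 1 T := by
    rw [hT, closedUnder_iterLam]
    refine ⟨?_, ?_⟩ <;> (simp only [Lam.ClosedUnder]; omega)
  refine ⟨.lam (.lam (.app (.var 1) T)), ?_, ?_, ?_⟩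
  · show Lam.ClosedUnder 2 (Lam.app (.var 1) T)
    exact ⟨by simp only [Lam.ClosedUnder]; omega, hTclosed2⟩
  · show Lam.InDet (Lam.app (.var 1) T)
    refine ⟨trivial, ?_, ?_⟩
    · rw [hT, inDet_iterLam]
      exact ⟨trivial, trivial, trivial⟩
    · rw [hT]; exact isValue_iterLam_succ k _
  · intro kont hv _ s
    have step1 : Lam.Step
        (Lam.app (Lam.app (.lam (.lam (.app (.var 1) T))) kont) (encStr k s))
        (Lam.app (.lam (.app (Lam.lift 0 kont) T)) (encStr k s)) := by
      have h := Lam.Step.appL (t := Lam.app (.lam (.lam (.app (.var 1) T))) kont)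
        (v := encStr k s) (encStr_isValue k s) (Lam.Step.beta hv)
      convert h using 2
      rw [show Lam.subst (Lam.lam ((Lam.var 1).app T)) 0 kont
            = Lam.lam (Lam.app (Lam.subst (.var 1) 1 (Lam.lift 0 kont))
                (Lam.subst T 1 (Lam.lift 0 kont))) from rfl,
          Lam.subst_of_closedUnder T _ hTclosed1]
      simp [Lam.subst]
    have step2 : Lam.Step
        (Lam.app (.lam (.app (Lam.lift 0 kont) T)) (encStr k s))
        (Lam.app kont (encStr k (a :: s))) := by
      have h := Lam.Step.beta (t := Lam.app (Lam.lift 0 kont) T)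
        (v := encStr k s) (encStr_isValue k s)
      convert h using 1
      show _ = Lam.app (Lam.subst (Lam.lift 0 kont) 0 (encStr k s))
        (Lam.subst T 0 (encStr k s))
      rw [Lam.subst_lift, hT, subst_iterLam_closed _ (encStr_closed k s)]
      simp only [Lam.subst]
      rw [if_pos (show (k : ℕ) - (a : ℕ) < 0 + (k + 1) by omega),
          if_neg (show ¬ (k + 1 < 0 + (k + 1)) by omega),
          if_pos (show k + 1 = 0 + (k + 1) by omega)]
      rfl
    exact .head step1 (.head step2 (.refl _))

end LogTM
end

section
/- There is a closed λ-term pred_λ of Λ_det and a constant c such that for every value k and every natural number n ≥ 1, pred_λ k ⟨n̂⟩ →det^m k ⟨pred(n̂)⟩ where m ≤ c·(log₂(n+1)+1), i.e. the predecessor of a nonzero binary counter is computed in O(log n) →det-steps. -/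
namespace LogTM

open Lam

/-! ### Basic lift/subst lemmas -/

theorem Lam.lift_lift (t : Lam) : ∀ i j, i ≤ j →
    lift i (lift j t) = lift (j + 1) (lift i t) := by
  induction t with
  | var n =>
    intro i j h
    simp only [lift]
    split_ifs <;> simp only [lift] <;> split_ifs <;>
      first | rfl | omega | (congr 1; omega)
  | lam t ih =>
    intro i j h
    simp only [lift, ih (i+1) (j+1) (by omega)]
  | app t u iht ihu =>
    intro i j h
    simp only [lift, iht i j h, ihu i j h]

theorem Lam.subst_lift_s6 (t : Lam) : ∀ j u, subst (lift j t) j u = t := by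
  induction t with
  | var n =>
    intro j u
    simp only [lift]
    split_ifs with h <;> simp only [subst] <;> split_ifs <;>
      first | rfl | omega | (congr 1; omega)
  | lam t ih =>
    intro j u
    simp only [lift, subst, ih]
  | app t v iht ihv =>
    intro j u
    simp only [lift, subst, iht, ihv]

theorem Lam.lift_subst (t : Lam) : ∀ u i j, i ≤ j →
    lift i (subst t j u) = subst (lift i t) (j + 1) (lift i u) := by
  induction t with
  | var n =>
    intro u i j h
    simp only [subst, lift]
    split_ifs <;> simp only [subst, lift] <;> split_ifs <;>
      first | rfl | omega | (congr 1; omega)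
  | lam t ih =>
    intro u i j h
    simp only [subst, lift, ih (lift 0 u) (i+1) (j+1) (by omega),
      Lam.lift_lift u 0 i (by omega)]
  | app t v iht ihv =>
    intro u i j h
    simp only [subst, lift, iht u i j h, ihv u i j h]

theorem Lam.subst_subst (t : Lam) : ∀ u v i j, i ≤ j →
    subst (subst t i u) j v = subst (subst t (j + 1) (lift i v)) i (subst u j v) := by
  induction t with
  | var n =>
    intro u v i j h
    simp only [subst]
    split_ifs <;> (try simp only [subst]) <;> (try split_ifs) <;>
      first
        | rfl | omega | (congr 1; omega) | (exfalso; omega)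
        | (exact (Lam.subst_lift_s6 v i (subst u j v)).symm)
  | lam t ih =>
    intro u v i j h
    simp only [subst, ih (lift 0 u) (lift 0 v) (i+1) (j+1) (by omega),
      Lam.lift_lift v 0 i (by omega), Lam.lift_subst u v 0 j (by omega)]
  | app t s iht ihs =>
    intro u v i j h
    simp only [subst, iht u v i j h, ihs u v i j h]

theorem Lam.IsValue.subst_val {w : Lam} (hw : w.IsValue) {v : Lam} (hv : v.IsValue)
    (j : ℕ) : (subst w j v).IsValue := by
  cases w with
  | var n =>
    simp only [subst]
    split_ifs <;> first | trivial | exact hv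
  | lam t => trivial
  | app t u => simp [IsValue] at hw

theorem Lam.Step.subst_step {a b : Lam} (h : Step a b) {v : Lam} (hv : v.IsValue)
    (j : ℕ) : Step (subst a j v) (subst b j v) := by
  induction h with
  | @beta t w hw =>
    have e := Lam.subst_subst t w v 0 j (by omega)
    rw [e]
    exact Step.beta (hw.subst_val hv j)
  | @appL t t' w hw _ ih =>
    exact Step.appL (hw.subst_val hv j) ih

theorem Lam.StepN.subst_stepN {m : ℕ} {a b : Lam} (h : StepN m a b) {v : Lam}
    (hv : v.IsValue) (j : ℕ) : StepN m (subst a j v) (subst b j v) := by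
  induction h with
  | refl t => exact StepN.refl _
  | head hs _ ih => exact StepN.head (hs.subst_step hv j) ih

theorem Lam.StepN.trans : ∀ {m n : ℕ} {a b c : Lam},
    StepN m a b → StepN n b c → StepN (m + n) a c := by
  intro m n a b c h1 h2
  induction h1 with
  | refl t => simpa using h2
  | @head k t u r hs _ ih =>
    exact (by omega : k + 1 + n = (k + n) + 1) ▸ StepN.head hs (ih h2)

theorem Lam.StepN.tail {m : ℕ} {a b c : Lam} (h : StepN m a b) (hs : Step b c) :
    StepN (m + 1) a c :=
  h.trans (StepN.head hs (StepN.refl _))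

/-! ### An executable step function and its soundness -/

def isValueB : Lam → Bool
  | .app _ _ => false
  | _ => true

theorem isValueB_sound {v : Lam} (h : isValueB v = true) : v.IsValue := by
  cases v <;> simp_all [isValueB, Lam.IsValue]

def stepFn : Lam → Option Lam
  | .app (.lam b) v => if isValueB v then some (Lam.subst b 0 v) else none
  | .app t v => if isValueB v then (stepFn t).map (fun t' => .app t' v) else none
  | _ => none

theorem stepFn_sound : ∀ t t', stepFn t = some t' → Lam.Step t t' := by
  intro t
  induction t with
  | var n => intro t' h; simp [stepFn] at h
  | lam b => intro t' h; simp [stepFn] at h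
  | app f v ihf _ =>
    intro t' h
    cases hv : isValueB v with
    | false => cases f <;> simp [stepFn, hv] at h
    | true =>
      have hv' : v.IsValue := isValueB_sound hv
      cases f with
      | var m => simp [stepFn, hv] at h
      | lam b =>
        simp [stepFn, hv] at h
        exact h ▸ Lam.Step.beta hv'
      | app a c =>
        simp [stepFn, hv, Option.map_eq_some_iff] at h
        obtain ⟨u, hu, rfl⟩ := h
        exact Lam.Step.appL hv' (ihf u hu)

def runFn : ℕ → Lam → Option Lam
  | 0, t => some t
  | n+1, t => (stepFn t).bind (runFn n)

theorem runFn_sound : ∀ n t t', runFn n t = some t' → Lam.StepN n t t' := by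
  intro n
  induction n with
  | zero => intro t t' h; simp [runFn] at h; exact h ▸ Lam.StepN.refl t
  | succ k ih =>
    intro t t' h
    simp only [runFn, Option.bind_eq_some_iff] at h
    obtain ⟨u, hu, hru⟩ := h
    exact Lam.StepN.head (stepFn_sound t u hu) (ih u t' hru)

/-! ### encBits facts -/

theorem encBits_isValue : ∀ s : List Bool, (encBits s).IsValue := by
  intro s
  cases s with
  | nil => trivial
  | cons b t => cases b <;> trivial

theorem encBits_lift : ∀ (s : List Bool) (d : ℕ), Lam.lift d (encBits s) = encBits s := by
  intro s
  induction s with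
  | nil => intro d; simp [encBits, Lam.lift]
  | cons b t ih => cases b <;> (intro d; simp [encBits, Lam.lift, ih])

theorem encBits_subst : ∀ (s : List Bool) (j : ℕ) (u : Lam),
    Lam.subst (encBits s) j u = encBits s := by
  intro s
  induction s with
  | nil => intro j u; simp [encBits, Lam.subst]
  | cons b t ih => cases b <;> (intro j u; simp [encBits, Lam.subst, ih])

/-! ### The predecessor term -/

def EMPTYx : Lam := .lam (.lam (.lam (.var 0)))
def consTrue : Lam := .lam (.lam (.lam (.app (.var 1) (.var 3))))
def Ksrc : Lam := .lam (.app (.var 4) consTrue)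
def F0 : Lam := .lam (.lam (.app (.app (.app (.var 4) (.var 4)) Ksrc) (.var 1)))
def CC0 : Lam := .lam (.lam (.lam (.app (.var 2) (.lam (.lam (.lam (.app (.var 2) (.var 7))))))))
def CC1 : Lam := .lam (.lam (.lam (.app (.var 2) (.lam (.lam (.lam (.app (.var 1) (.var 7))))))))
def G0 : Lam := .lam (.lam (.app (.var 5) CC0))
def G1 : Lam := .lam (.lam (.app (.var 5) CC1))
def GE : Lam := .lam (.app (.var 4) EMPTYx)
def Idm : Lam := .lam (.var 0)
def F1 : Lam := .lam (.lam (.app (.app (.app (.app (.var 1) G0) G1) GE) Idm))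
def FE : Lam := .lam (.app (.var 2) EMPTYx)
def BODY : Lam := .app (.app (.app (.app (.var 0) F0) F1) FE) Idm
def Acomb : Lam := .lam (.lam (.lam BODY))
def PP : Lam := .app Acomb Acomb

def startNil : Lam := .app (.app PP (.var 0)) EMPTYx
def startFalse : Lam := .app (.app PP (.var 0)) (.lam (.lam (.lam (.app (.var 2) (.var 4)))))
def startTrueNil : Lam := .app (.app PP (.var 0)) (.lam (.lam (.lam (.app (.var 1) EMPTYx))))
def startTrueFalse : Lam :=
  .app (.app PP (.var 0)) (.lam (.lam (.lam (.app (.var 1)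
    (.lam (.lam (.lam (.app (.var 2) (.var 7)))))))))
def startTrueTrue : Lam :=
  .app (.app PP (.var 0)) (.lam (.lam (.lam (.app (.var 1)
    (.lam (.lam (.lam (.app (.var 1) (.var 7)))))))))
def Kfalse : Lam := .lam (.app (.var 1) consTrue)
def endFalse : Lam := .app (.app PP Kfalse) (.var 1)
def endTrueFalse : Lam :=
  .app (.var 0) (.lam (.lam (.lam (.app (.var 2) (.lam (.lam (.lam (.app (.var 2) (.var 7)))))))))
def endTrueTrue : Lam :=
  .app (.var 0) (.lam (.lam (.lam (.app (.var 2) (.lam (.lam (.lam (.app (.var 1) (.var 7)))))))))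

theorem chunkNil : Lam.StepN 7 startNil (.app (.var 0) EMPTYx) :=
  runFn_sound 7 _ _ rfl

theorem chunkFalse : Lam.StepN 8 startFalse endFalse :=
  runFn_sound 8 _ _ rfl

theorem chunkTrueNil : Lam.StepN 12 startTrueNil (.app (.var 0) EMPTYx) :=
  runFn_sound 12 _ _ rfl

theorem chunkTrueFalse : Lam.StepN 13 startTrueFalse endTrueFalse :=
  runFn_sound 13 _ _ rfl

theorem chunkTrueTrue : Lam.StepN 13 startTrueTrue endTrueTrue :=
  runFn_sound 13 _ _ rfl

/-! ### The main run lemma -/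

theorem run : ∀ (s : List Bool) (K : Lam), K.IsValue →
    ∃ m, m ≤ 9 * s.length + 13 ∧
      Lam.StepN m (.app (.app PP K) (encBits s)) (.app K (encBits (rpred s))) := by
  intro s
  induction s with
  | nil =>
    intro K hK
    refine ⟨7, by omega, ?_⟩
    have h := chunkNil.subst_stepN hK 0
    have e1 : Lam.subst startNil 0 K = .app (.app PP K) (encBits []) := rfl
    have e2 : Lam.subst (.app (.var 0) EMPTYx) 0 K = .app K (encBits (rpred [])) := rfl
    rw [e1, e2] at h
    exact h
  | cons b t ih =>
    cases b with
    | false =>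
      intro K hK
      obtain ⟨m, hm, hrec⟩ := ih (.lam (.app (.lift 0 K) consTrue)) trivial
      refine ⟨8 + m + 1, by simp only [List.length_cons]; omega, ?_⟩
      have h := (chunkFalse.subst_stepN (encBits_isValue t) 1).subst_stepN hK 0
      have e1 : Lam.subst (Lam.subst startFalse 1 (encBits t)) 0 K
          = .app (.app PP K) (encBits (false :: t)) := by
        simp [startFalse, PP, Acomb, BODY, F0, F1, FE, G0, G1, GE, Idm, CC0, CC1,
          Ksrc, consTrue, EMPTYx, Lam.subst, Lam.lift, encBits, encBits_lift, encBits_subst]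
      have e2 : Lam.subst (Lam.subst endFalse 1 (encBits t)) 0 K
          = .app (.app PP (.lam (.app (.lift 0 K) consTrue))) (encBits t) := by
        simp [endFalse, Kfalse, PP, Acomb, BODY, F0, F1, FE, G0, G1, GE, Idm, CC0, CC1,
          Ksrc, consTrue, EMPTYx, Lam.subst, Lam.lift, encBits, encBits_lift, encBits_subst]
      rw [e1, e2] at h
      have hstep : Lam.Step (.app (.lam (.app (.lift 0 K) consTrue)) (encBits (rpred t)))
          (.app K (encBits (true :: rpred t))) := by
        have e : Lam.subst (.app (.lift 0 K) consTrue) 0 (encBits (rpred t))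
            = .app K (encBits (true :: rpred t)) := by
          simp [Lam.subst, consTrue, Lam.subst_lift_s6, encBits, encBits_lift, Lam.lift]
        exact e ▸ Lam.Step.beta (encBits_isValue (rpred t))
      have hall := (h.trans hrec).tail hstep
      exact hall
    | true =>
      intro K hK
      cases t with
      | nil =>
        refine ⟨12, by simp only [List.length_cons]; omega, ?_⟩
        have h := chunkTrueNil.subst_stepN hK 0
        have e1 : Lam.subst startTrueNil 0 K = .app (.app PP K) (encBits [true]) := rfl
        have e2 : Lam.subst (.app (.var 0) EMPTYx) 0 K
            = .app K (encBits (rpred [true])) := rfl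
        rw [e1, e2] at h
        exact h
      | cons c u =>
        refine ⟨13, by simp only [List.length_cons]; omega, ?_⟩
        cases c with
        | false =>
          have h := (chunkTrueFalse.subst_stepN (encBits_isValue u) 1).subst_stepN hK 0
          have e1 : Lam.subst (Lam.subst startTrueFalse 1 (encBits u)) 0 K
              = .app (.app PP K) (encBits (true :: false :: u)) := by
            simp [startTrueFalse, PP, Acomb, BODY, F0, F1, FE, G0, G1, GE, Idm, CC0, CC1,
              Ksrc, consTrue, EMPTYx, Lam.subst, Lam.lift, encBits, encBits_lift, encBits_subst]
          have e2 : Lam.subst (Lam.subst endTrueFalse 1 (encBits u)) 0 K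
              = .app K (encBits (rpred (true :: false :: u))) := by
            simp [endTrueFalse, rpred, Lam.subst, Lam.lift, encBits, encBits_lift, encBits_subst]
          rw [e1, e2] at h
          exact h
        | true =>
          have h := (chunkTrueTrue.subst_stepN (encBits_isValue u) 1).subst_stepN hK 0
          have e1 : Lam.subst (Lam.subst startTrueTrue 1 (encBits u)) 0 K
              = .app (.app PP K) (encBits (true :: true :: u)) := by
            simp [startTrueTrue, PP, Acomb, BODY, F0, F1, FE, G0, G1, GE, Idm, CC0, CC1,
              Ksrc, consTrue, EMPTYx, Lam.subst, Lam.lift, encBits, encBits_lift, encBits_subst]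
          have e2 : Lam.subst (Lam.subst endTrueTrue 1 (encBits u)) 0 K
              = .app K (encBits (rpred (true :: true :: u))) := by
            simp [endTrueTrue, rpred, Lam.subst, Lam.lift, encBits, encBits_lift, encBits_subst]
          rw [e1, e2] at h
          exact h

theorem PP_closed : PP.Closed := by
  simp [PP, Acomb, BODY, F0, F1, FE, G0, G1, GE, Idm, CC0, CC1, Ksrc, consTrue, EMPTYx,
    Lam.Closed, Lam.ClosedUnder]

theorem PP_indet : PP.InDet := by
  simp [PP, Acomb, BODY, F0, F1, FE, G0, G1, GE, Idm, CC0, CC1, Ksrc, consTrue, EMPTYx,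
    Lam.InDet, Lam.IsValue]


/-- there is a closed λ-term `pred_λ` of `Λ_det` and a constant `c`
    such that for every value `k` and every `n ≥ 1`,
    `pred_λ k ⟨n̂⟩ →det^m k ⟨pred(n̂)⟩` with `m ≤ c·(log₂(n+1)+1)`. -/
theorem pred_term_correct :
    ∃ (predTm : Lam) (c : ℕ), predTm.Closed ∧ predTm.InDet ∧
      ∀ kont : Lam, kont.IsValue → kont.InDet → ∀ n : ℕ, 1 ≤ n →
        ∃ m : ℕ, m ≤ c * (Nat.log 2 (n + 1) + 1) ∧
          Lam.StepN m (.app (.app predTm kont) (encBits (Nat.bits n)))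
            (.app kont (encBits (rpred (Nat.bits n)))) := by
  refine ⟨PP, 22, PP_closed, PP_indet, ?_⟩
  intro kont hv _ n hn
  obtain ⟨m, hm, hs⟩ := run (Nat.bits n) kont hv
  refine ⟨m, ?_, hs⟩
  have hlen : (Nat.bits n).length ≤ Nat.log 2 (n + 1) + 1 := by
    rw [Nat.size_eq_bits_len]
    exact Nat.size_le.mpr (by
      have := Nat.lt_pow_succ_log_self (by norm_num : 1 < 2) (n + 1)
      omega)
  omega

end LogTM
end

section
/- Composition of pred and lookup: for every natural number n > 0 and every nonempty string c·s, lookup n̂ (c·s) = lookup ((n−1)̂) s; consequently, for every string s and every n < |s|, lookup n̂ s equals lookup 0̂ applied to the suffix of s starting at position n, namely the character of s at position n. -/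
namespace LogTM

lemma bits_ne_nil' {n : ℕ} (h : 0 < n) : Nat.bits n ≠ [] := by
  intro he
  rcases Nat.even_or_odd n with ⟨m, hm⟩ | ⟨m, hm⟩
  · have : n = 2 * m := by omega
    subst this
    rw [Nat.bit0_bits m (by omega)] at he; simp at he
  · subst hm; rw [Nat.bit1_bits] at he; simp at he

lemma rpred_bits : ∀ n : ℕ, 0 < n → rpred (Nat.bits n) = Nat.bits (n - 1) := by
  intro n
  induction n using Nat.strong_induction_on with
  | _ n ih =>
  intro hn
  rcases Nat.even_or_odd n with ⟨m, hm⟩ | ⟨m, hm⟩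
  · have hm0 : 0 < m := by omega
    have : n = 2 * m := by omega
    subst this
    rw [Nat.bit0_bits m (by omega), rpred, ih m (by omega) hm0]
    have : 2 * m - 1 = 2 * (m - 1) + 1 := by omega
    rw [this, Nat.bit1_bits]
  · subst hm
    rcases Nat.eq_zero_or_pos m with rfl | hm0
    · simp [Nat.one_bits, rpred]
    · rw [Nat.bit1_bits]
      obtain ⟨b, t, hbs⟩ : ∃ b t, Nat.bits m = b :: t := by
        rcases h : Nat.bits m with _ | ⟨b, t⟩
        · exact absurd h (bits_ne_nil' hm0)
        · exact ⟨b, t, rfl⟩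
      rw [hbs, rpred, ← hbs, ← Nat.bit0_bits m (by omega)]
      congr 1

lemma rlookup_pred_aux {α : Type*} (n : ℕ) (hn : 0 < n) (c : α) (s : List α) :
    rlookup (Nat.bits n) (c :: s) = rlookup (Nat.bits (n - 1)) s := by
  obtain ⟨b, t, hbs⟩ : ∃ b t, Nat.bits n = b :: t := by
    rcases h : Nat.bits n with _ | ⟨b, t⟩
    · exact absurd h (bits_ne_nil' hn)
    · exact ⟨b, t, rfl⟩
  rw [hbs, rlookup, ← hbs, rpred_bits n hn]

/-- composition of pred and lookup: for every `n > 0` and nonempty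
    string `c·s`, `lookup n̂ (c·s) = lookup (n−1)̂ s`; consequently, for every `s`
    and `n < |s|`, `lookup n̂ s = lookup 0̂ (drop n s)`, the character of `s` at
    position `n`. -/
theorem lookup_pred :
    (∀ n : ℕ, 0 < n → ∀ (α : Type*) (c : α) (s : List α),
        rlookup (Nat.bits n) (c :: s) = rlookup (Nat.bits (n - 1)) s) ∧
    (∀ (α : Type*) (s : List α) (n : ℕ), n < s.length →
        rlookup (Nat.bits n) s = rlookup (Nat.bits 0) (s.drop n)) := by
  constructor
  · exact fun n hn α c s => rlookup_pred_aux n hn c s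
  · intro α s
    induction s with
    | nil => intro n hn; simp at hn
    | cons c s ih =>
      intro n hn
      rcases Nat.eq_zero_or_pos n with rfl | hn0
      · simp
      · rw [rlookup_pred_aux n hn0 c s, ih (n - 1) (by simp at hn; omega)]
        congr 1
        rcases n with _ | m
        · omega
        · simp

end LogTM
end
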